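/- Let (ℬ_I : I ∈ ℐ) satisfy Jones' conditions (J1)–(J4) with constant κ_J, and b_I = Σ_{K∈ℬ_I} h_K. Then the operator Q : SL^∞ → SL^∞, Q f = Σ_{I∈ℐ} (⟨f, b_I⟩/‖b_I‖₂²) h_I, satisfies ‖Q f‖_{SL^∞} ≤ κ_J^{1/2} ‖f‖_{SL^∞} for all f ∈ SL^∞. -/

import Mathlib

/- Setup: dyadic intervals on [0,1), L^∞-normalized Haar coefficients, the SL^∞
square-function norm, the dyadic H^1 norm, and the L² pairing, all expressed on
the space `Dy → ℝ` of Haar coefficient sequences. -/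

open MeasureTheory Filter ENNReal

noncomputable section

/-- Dyadic intervals, encoded as pairs (n, k) with k < 2^n. -/
abbrev Dy := {p : ℕ × ℕ // p.2 < 2 ^ p.1}

/-- The level (frequency) of a dyadic interval. -/
def dlev (I : Dy) : ℕ := I.val.1

/-- The dyadic interval [k/2^n, (k+1)/2^n) as a subset of ℝ. -/
def dint (I : Dy) : Set ℝ :=
  Set.Ico ((I.val.2 : ℝ) / 2 ^ I.val.1) ((I.val.2 + 1 : ℝ) / 2 ^ I.val.1)

/-- The length |I| = 2^{-n} of a dyadic interval. -/
def dlen (I : Dy) : ℝ := ((2 : ℝ) ^ I.val.1)⁻¹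

/-- The square function (Σ_I a_I² 1_I(x)) of the Haar series with coefficients `a`. -/
def sqFn (a : Dy → ℝ) (x : ℝ) : ℝ≥0∞ :=
  ∑' I : Dy, Set.indicator (dint I) (fun _ => ENNReal.ofReal ((a I) ^ 2)) x

/-- The SL^∞ norm: ‖Σ a_I h_I‖ = sup_x (Σ a_I² 1_I(x))^{1/2}. -/
def slNorm (a : Dy → ℝ) : ℝ≥0∞ := ⨆ x : ℝ, sqFn a x ^ (1 / 2 : ℝ)

/-- The dyadic H^1 norm: ∫₀¹ (Σ a_I² 1_I(x))^{1/2} dx. -/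
def h1Norm (a : Dy → ℝ) : ℝ≥0∞ := ∫⁻ x in Set.Ico (0 : ℝ) 1, sqFn a x ^ (1 / 2 : ℝ)

/-- The L² pairing ⟨f, g⟩ = Σ_I a_I b_I |I| of two Haar series. -/
def pairing (a b : Dy → ℝ) : ℝ := ∑' I : Dy, a I * b I * dlen I


open scoped ENNReal

/-- The set B_I = ⋃_{K ∈ ℬ_I} K for a collection ℬ_I of dyadic intervals. -/
def unionBD (ℬ : Dy → Set Dy) (I : Dy) : Set ℝ := ⋃ K ∈ ℬ I, dint K

/-- Jones' compatibility conditions (J1)–(J4) with constant κ for a family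
(ℬ_I : I ∈ ℐ) of collections of dyadic intervals. -/
def JonesD (κ : ℝ≥0∞) (ℐ : Set Dy) (ℬ : Dy → Set Dy) : Prop :=
  -- (J1): finitely many building blocks (dyadic intervals are automatically
  -- measurable, nested and of positive measure).
  (Set.Finite (⋃ I ∈ ℐ, ℬ I)) ∧
  -- (J2): each ℬ_I is nonempty with pairwise disjoint members; distinct
  -- collections are disjoint.
  (∀ I ∈ ℐ, (ℬ I).Nonempty) ∧
  (∀ I ∈ ℐ, (ℬ I).Pairwise fun K K' => Disjoint (dint K) (dint K')) ∧
  (∀ I₀ ∈ ℐ, ∀ I₁ ∈ ℐ, I₀ ≠ I₁ → Disjoint (ℬ I₀) (ℬ I₁)) ∧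
  -- (J3):
  (∀ I₀ ∈ ℐ, ∀ I₁ ∈ ℐ, Disjoint (dint I₀) (dint I₁) →
    Disjoint (unionBD ℬ I₀) (unionBD ℬ I₁)) ∧
  (∀ I₀ ∈ ℐ, ∀ I₁ ∈ ℐ, dint I₀ ⊆ dint I₁ → unionBD ℬ I₀ ⊆ unionBD ℬ I₁) ∧
  -- (J4):
  (∀ I₀ ∈ ℐ, ∀ I ∈ ℐ, dint I₀ ⊆ dint I → ∀ K ∈ ℬ I,
    κ⁻¹ * (MeasureTheory.volume (unionBD ℬ I₀) / MeasureTheory.volume (unionBD ℬ I))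
      ≤ MeasureTheory.volume (dint K ∩ unionBD ℬ I₀) / MeasureTheory.volume (dint K))

/-- The Haar coefficients of B f = Σ_{I ∈ ℐ} (⟨f, h_I⟩/‖h_I‖₂²) b_I, where
b_I = Σ_{K ∈ ℬ_I} h_K: the coefficient of h_K is a_I for the (unique) I ∈ ℐ
with K ∈ ℬ_I. -/
def Bop (ℐ : Set Dy) (ℬ : Dy → Set Dy) (a : Dy → ℝ) : Dy → ℝ :=
  fun K => ∑' I : {I : Dy // I ∈ ℐ ∧ K ∈ ℬ I}, a I.val

/-- The Haar coefficients of Q f = Σ_{I ∈ ℐ} (⟨f, b_I⟩/‖b_I‖₂²) h_I: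
the coefficient of h_I (I ∈ ℐ) is (Σ_{K ∈ ℬ_I} a_K |K|) / (Σ_{K ∈ ℬ_I} |K|). -/
def Qop (ℐ : Set Dy) (ℬ : Dy → Set Dy) (a : Dy → ℝ) : Dy → ℝ :=
  fun I => Set.indicator ℐ
    (fun _ => (∑' K : ℬ I, a K.val * dlen K.val) / (∑' K : ℬ I, dlen K.val)) I

/- ## Helper lemmas -/

lemma dlen_pos (I : Dy) : 0 < dlen I := by rw [dlen]; positivity

lemma measurable_dint (I : Dy) : MeasurableSet (dint I) := measurableSet_Ico

lemma volume_dint (I : Dy) : volume (dint I) = ENNReal.ofReal (dlen I) := by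
  rw [dint, Real.volume_Ico]
  congr 1
  have h : (0:ℝ) < 2 ^ I.val.1 := by positivity
  field_simp [dlen]
  rw [dlen, mul_inv_cancel₀ h.ne']; ring

lemma dint_subset {I J : Dy} {x : ℝ} (hI : x ∈ dint I) (hJ : x ∈ dint J)
    (h : dlev J ≤ dlev I) : dint I ⊆ dint J := by
  obtain ⟨⟨n, k⟩, hk⟩ := I
  obtain ⟨⟨m, l⟩, hl⟩ := J
  simp only [dint, Set.mem_Ico, dlev] at *
  obtain ⟨hI1, hI2⟩ := hI
  obtain ⟨hJ1, hJ2⟩ := hJ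
  set d := n - m with hd
  have hnm : n = m + d := by omega
  have h2m : (0:ℝ) < 2 ^ m := by positivity
  have h2n : (0:ℝ) < 2 ^ n := by positivity
  have h2d : (0:ℝ) < 2 ^ d := by positivity
  have hpow : (2:ℝ) ^ n = 2 ^ m * 2 ^ d := by rw [hnm, pow_add]
  have h1 : (l:ℝ) * 2 ^ d < k + 1 := by
    have := lt_of_le_of_lt hJ1 hI2
    rw [div_lt_div_iff₀ h2m h2n] at this
    rw [hpow] at this
    nlinarith
  have h1' : l * 2 ^ d ≤ k := by
    have : (l * 2 ^ d : ℕ) < k + 1 := by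
      exact_mod_cast (by push_cast; exact h1 : ((l * 2 ^ d : ℕ) : ℝ) < (k + 1 : ℕ))
    omega
  have h2 : (k:ℝ) < (l + 1) * 2 ^ d := by
    have := lt_of_le_of_lt hI1 hJ2
    rw [div_lt_div_iff₀ h2n h2m] at this
    rw [hpow] at this
    nlinarith
  have h2' : k + 1 ≤ (l + 1) * 2 ^ d := by
    have : k < (l + 1) * 2 ^ d := by
      exact_mod_cast (by push_cast; exact h2 : ((k:ℕ):ℝ) < ((l+1) * 2 ^ d : ℕ))
    omega
  intro y hy
  obtain ⟨hy1, hy2⟩ := hy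
  constructor
  · have : (l:ℝ) * 2 ^ d ≤ k := by exact_mod_cast h1'
    rw [div_le_iff₀ h2m]
    rw [div_le_iff₀ h2n] at hy1
    nlinarith
  · have : (k:ℝ) + 1 ≤ (l + 1) * 2 ^ d := by exact_mod_cast h2'
    rw [lt_div_iff₀ h2m]
    rw [lt_div_iff₀ h2n] at hy2
    nlinarith

lemma tsum_set_eq_sum {M : Type*} [AddCommMonoid M] [TopologicalSpace M] [T2Space M]
    {s : Set Dy} (hs : s.Finite) (f : Dy → M) : ∑' x : s, f x = ∑ x ∈ hs.toFinset, f x := by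
  rw [tsum_subtype, tsum_eq_sum (s := hs.toFinset)
    (fun b hb => Set.indicator_of_notMem (fun hmem => hb (hs.mem_toFinset.mpr hmem)) f)]
  exact Finset.sum_congr rfl fun x hx => Set.indicator_of_mem (hs.mem_toFinset.mp hx) f

lemma key_lintegral (a : Dy → ℝ) (F : Finset Dy) (B : Set ℝ) :
    ∑ K ∈ F, ENNReal.ofReal (a K ^ 2) * volume (dint K ∩ B)
      ≤ (⨆ y, sqFn a y) * volume B := by
  calc ∑ K ∈ F, ENNReal.ofReal (a K ^ 2) * volume (dint K ∩ B)
      = ∫⁻ y in B, ∑ K ∈ F, (dint K).indicator (fun _ => ENNReal.ofReal (a K ^ 2)) y := by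
        rw [lintegral_finset_sum _ (fun K _ => measurable_const.indicator (measurable_dint K))]
        refine Finset.sum_congr rfl fun K _ => ?_
        rw [lintegral_indicator_const (measurable_dint K),
          Measure.restrict_apply (measurable_dint K)]
    _ ≤ ∫⁻ y in B, sqFn a y := lintegral_mono fun y => ENNReal.sum_le_tsum F
    _ ≤ ∫⁻ _ in B, (⨆ y, sqFn a y) := lintegral_mono fun y => le_iSup _ y
    _ = (⨆ y, sqFn a y) * volume B := setLIntegral_const _ _

lemma rpow_half_sq (x : ℝ≥0∞) : (x ^ (1/2 : ℝ)) ^ (2:ℝ) = x := by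
  rw [← ENNReal.rpow_mul]; norm_num

lemma sup_sqFn_le (a : Dy → ℝ) : (⨆ y, sqFn a y) ^ (1/2 : ℝ) ≤ slNorm a := by
  have hT : (⨆ y, sqFn a y) ≤ slNorm a ^ (2:ℝ) := by
    refine iSup_le fun y => ?_
    calc sqFn a y = (sqFn a y ^ (1/2:ℝ)) ^ (2:ℝ) := (rpow_half_sq _).symm
      _ ≤ slNorm a ^ (2:ℝ) :=
        ENNReal.rpow_le_rpow (le_iSup (fun x => sqFn a x ^ (1/2:ℝ)) y) (by norm_num)
  calc (⨆ y, sqFn a y) ^ (1/2:ℝ) ≤ (slNorm a ^ (2:ℝ)) ^ (1/2:ℝ) :=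
        ENNReal.rpow_le_rpow hT (by norm_num)
    _ = slNorm a := by rw [← ENNReal.rpow_mul]; norm_num

/-- under Jones' conditions with constant κ, the operator
Q f = Σ_{I∈ℐ} (⟨f,b_I⟩/‖b_I‖₂²) h_I satisfies ‖Qf‖_{SL^∞} ≤ κ^{1/2} ‖f‖_{SL^∞}. -/
theorem slNorm_Qop_le (κ : ℝ≥0∞) (ℐ : Set Dy) (ℬ : Dy → Set Dy)
    (h : JonesD κ ℐ ℬ) (a : Dy → ℝ) :
    slNorm (Qop ℐ ℬ a) ≤ κ ^ (1 / 2 : ℝ) * slNorm a := by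
  classical
  obtain ⟨h1, h2, h3, h4, _h5, _h6, h7⟩ := h
  -- Case slNorm a = 0
  by_cases ha : slNorm a = 0
  · have hzero : ∀ I, a I = 0 := by
      intro I
      set x₀ : ℝ := (I.val.2 : ℝ) / 2 ^ I.val.1 with hx₀
      have hmem : x₀ ∈ dint I := by
        refine ⟨le_refl _, ?_⟩
        have h2n : (0:ℝ) < 2 ^ I.val.1 := by positivity
        rw [div_lt_div_iff₀ h2n h2n]
        nlinarith
      have hle : ENNReal.ofReal (a I ^ 2) ≤ sqFn a x₀ := by
        have := ENNReal.le_tsum (f := fun J : Dy =>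
          Set.indicator (dint J) (fun _ => ENNReal.ofReal ((a J) ^ 2)) x₀) I
        rwa [Set.indicator_of_mem hmem] at this
      have hsq0 : sqFn a x₀ = 0 := by
        have h0 : sqFn a x₀ ^ (1/2:ℝ) = 0 :=
          le_antisymm (ha ▸ le_iSup (fun x => sqFn a x ^ (1/2:ℝ)) x₀) (zero_le)
        rcases ENNReal.rpow_eq_zero_iff.mp h0 with ⟨h', _⟩ | ⟨_, h'⟩
        · exact h'
        · norm_num at h'
      have : ENNReal.ofReal (a I ^ 2) = 0 := le_antisymm (hsq0 ▸ hle) (zero_le)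
      have := ENNReal.ofReal_eq_zero.mp this
      nlinarith [sq_nonneg (a I)]
    have hQ0 : ∀ I, Qop ℐ ℬ a I = 0 := by
      intro I; simp [Qop, hzero]
    have : slNorm (Qop ℐ ℬ a) = 0 := by
      have : sqFn (Qop ℐ ℬ a) = fun _ => 0 := by
        funext x; simp [sqFn, hQ0]
      rw [slNorm, this]
      simp [ENNReal.zero_rpow_of_pos]
    rw [this]; exact zero_le
  -- Case κ = ∞
  by_cases hκ : κ = ∞
  · rw [hκ, ENNReal.top_rpow_of_pos (by norm_num), ENNReal.top_mul ha]
    exact le_top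
  -- Main case
  -- ℐ is finite
  have hBfin : ∀ I ∈ ℐ, (ℬ I).Finite := fun I hI =>
    h1.subset (Set.subset_biUnion_of_mem (u := ℬ) hI)
  have hIfin : ℐ.Finite := by
    set f : Dy → Dy := fun I => if hI : I ∈ ℐ then (h2 I hI).some else I with hf
    have hinj : Set.InjOn f ℐ := by
      intro I hI J hJ hIJ
      by_contra hne
      have hmemI : f I ∈ ℬ I := by rw [hf]; simp only [dif_pos hI]; exact (h2 I hI).some_mem
      have hmemJ : f J ∈ ℬ J := by rw [hf]; simp only [dif_pos hJ]; exact (h2 J hJ).some_mem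
      exact (h4 I hI J hJ hne).ne_of_mem hmemI (hIJ ▸ hmemJ) rfl
    have himg : (f '' ℐ).Finite := by
      apply h1.subset
      rintro _ ⟨I, hI, rfl⟩
      exact Set.mem_biUnion hI (by rw [hf]; simp only [dif_pos hI]; exact (h2 I hI).some_mem)
    exact Set.Finite.of_finite_image himg hinj
  -- reduce sup over x
  rw [slNorm]
  refine iSup_le fun x => ?_
  set T : ℝ≥0∞ := ⨆ y, sqFn a y with hT
  suffices hmain : sqFn (Qop ℐ ℬ a) x ≤ κ * T by
    calc sqFn (Qop ℐ ℬ a) x ^ (1/2:ℝ) ≤ (κ * T) ^ (1/2:ℝ) :=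
          ENNReal.rpow_le_rpow hmain (by norm_num)
      _ = κ ^ (1/2:ℝ) * T ^ (1/2:ℝ) := ENNReal.mul_rpow_of_nonneg _ _ (by norm_num)
      _ ≤ κ ^ (1/2:ℝ) * slNorm a := by
          exact mul_le_mul_right (sup_sqFn_le a) _
  -- the set of relevant intervals
  set s : Set Dy := {I | I ∈ ℐ ∧ x ∈ dint I} with hs
  have hsfin : s.Finite := hIfin.subset fun I hI => hI.1
  have hsq : sqFn (Qop ℐ ℬ a) x
      = ∑ I ∈ hsfin.toFinset, ENNReal.ofReal ((Qop ℐ ℬ a I) ^ 2) := by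
    rw [sqFn, tsum_eq_sum (s := hsfin.toFinset) ?_]
    · exact Finset.sum_congr rfl fun I hI =>
        Set.indicator_of_mem (hsfin.mem_toFinset.mp hI).2 _
    · intro I hI
      by_cases hx : x ∈ dint I
      · have hIne : I ∉ ℐ := fun hIℐ => hI (hsfin.mem_toFinset.mpr ⟨hIℐ, hx⟩)
        rw [Set.indicator_of_mem hx]
        simp [Qop, Set.indicator_of_notMem hIne]
      · exact Set.indicator_of_notMem hx _
  rw [hsq]
  -- if s is empty we are done
  rcases Finset.eq_empty_or_nonempty hsfin.toFinset with hemp | hne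
  · rw [hemp, Finset.sum_empty]; exact zero_le
  -- select the minimal interval I₀
  obtain ⟨I₀, hI₀mem, hI₀max⟩ := hsfin.toFinset.exists_max_image dlev hne
  have hI₀ : I₀ ∈ s := hsfin.mem_toFinset.mp hI₀mem
  have hmin : ∀ I ∈ s, dint I₀ ⊆ dint I := fun I hI =>
    dint_subset hI₀.2 hI.2 (hI₀max I (hsfin.mem_toFinset.mpr hI))
  set B₀ : Set ℝ := unionBD ℬ I₀ with hB₀
  set V₀ : ℝ≥0∞ := volume B₀ with hV₀
  -- block finsets
  set BF : Dy → Finset Dy := fun I => if hI : I ∈ ℐ then (hBfin I hI).toFinset else ∅ with hBF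
  have hBFmem : ∀ I (hI : I ∈ ℐ) K, K ∈ BF I ↔ K ∈ ℬ I := by
    intro I hI K
    rw [hBF]; simp only [dif_pos hI, Set.Finite.mem_toFinset]
  -- volume of unionBD
  have hVol : ∀ I (hI : I ∈ ℐ),
      volume (unionBD ℬ I) = ENNReal.ofReal (∑ K ∈ BF I, dlen K) := by
    intro I hI
    have hcoe : unionBD ℬ I = ⋃ K ∈ BF I, dint K := by
      ext y
      simp only [unionBD, Set.mem_iUnion, exists_prop, hBFmem I hI]
    rw [hcoe, measure_biUnion_finset ?_ (fun K _ => measurable_dint K)]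
    · rw [ENNReal.ofReal_sum_of_nonneg (fun K _ => (dlen_pos K).le)]
      exact Finset.sum_congr rfl fun K _ => volume_dint K
    · intro K hK K' hK' hne
      exact h3 I hI ((hBFmem I hI K).mp hK) ((hBFmem I hI K').mp hK') hne
  have hSpos : ∀ I (hI : I ∈ ℐ), 0 < ∑ K ∈ BF I, dlen K := by
    intro I hI
    refine Finset.sum_pos (fun K _ => dlen_pos K) ?_
    obtain ⟨K, hK⟩ := h2 I hI
    exact ⟨K, (hBFmem I hI K).mpr hK⟩
  have hVne : ∀ I (hI : I ∈ ℐ), volume (unionBD ℬ I) ≠ 0 := by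
    intro I hI; rw [hVol I hI]
    simp only [ne_eq, ENNReal.ofReal_eq_zero, not_le]
    exact hSpos I hI
  have hVnetop : ∀ I (hI : I ∈ ℐ), volume (unionBD ℬ I) ≠ ∞ := fun I hI => by
    rw [hVol I hI]; exact ENNReal.ofReal_ne_top
  -- Qop value and Cauchy-Schwarz
  have hQval : ∀ I (hI : I ∈ ℐ),
      Qop ℐ ℬ a I = (∑ K ∈ BF I, a K * dlen K) / (∑ K ∈ BF I, dlen K) := by
    intro I hI
    rw [Qop, Set.indicator_of_mem hI]
    have hfe : (hBfin I hI).toFinset = BF I := by rw [hBF]; simp only [dif_pos hI]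
    rw [tsum_set_eq_sum (hBfin I hI) (fun K => a K * dlen K),
      tsum_set_eq_sum (hBfin I hI) dlen, hfe]
  have hCS : ∀ I (hI : I ∈ ℐ),
      (Qop ℐ ℬ a I) ^ 2 * (∑ K ∈ BF I, dlen K) ≤ ∑ K ∈ BF I, a K ^ 2 * dlen K := by
    intro I hI
    have hcs := Finset.sum_mul_sq_le_sq_mul_sq (BF I)
      (fun K => a K * Real.sqrt (dlen K)) (fun K => Real.sqrt (dlen K))
    have e1 : ∀ K ∈ BF I, (a K * Real.sqrt (dlen K)) * Real.sqrt (dlen K) = a K * dlen K := by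
      intro K _; rw [mul_assoc, Real.mul_self_sqrt (dlen_pos K).le]
    have e2 : ∀ K ∈ BF I, (a K * Real.sqrt (dlen K)) ^ 2 = a K ^ 2 * dlen K := by
      intro K _; rw [mul_pow, Real.sq_sqrt (dlen_pos K).le]
    have e3 : ∀ K ∈ BF I, (Real.sqrt (dlen K)) ^ 2 = dlen K := by
      intro K _; rw [Real.sq_sqrt (dlen_pos K).le]
    rw [Finset.sum_congr rfl e1, Finset.sum_congr rfl e2, Finset.sum_congr rfl e3] at hcs
    have hp := hSpos I hI
    rw [hQval I hI, div_pow, div_mul_eq_mul_div, div_le_iff₀ (pow_pos hp 2)]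
    calc (∑ K ∈ BF I, a K * dlen K) ^ 2 * (∑ K ∈ BF I, dlen K)
        ≤ ((∑ K ∈ BF I, a K ^ 2 * dlen K) * (∑ K ∈ BF I, dlen K)) * (∑ K ∈ BF I, dlen K) :=
          mul_le_mul_of_nonneg_right hcs hp.le
      _ = (∑ K ∈ BF I, a K ^ 2 * dlen K) * (∑ K ∈ BF I, dlen K) ^ 2 := by ring
  -- J4-based key estimate per interval
  have hkey : ∀ I ∈ s, ENNReal.ofReal ((Qop ℐ ℬ a I) ^ 2) * V₀
      ≤ κ * ∑ K ∈ BF I, ENNReal.ofReal (a K ^ 2) * volume (dint K ∩ B₀) := by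
    intro I hIs
    have hI : I ∈ ℐ := hIs.1
    set VI := volume (unionBD ℬ I) with hVIdef
    have hVIne : VI ≠ 0 := hVne I hI
    have hVIt : VI ≠ ∞ := hVnetop I hI
    have hV0ne : V₀ ≠ 0 := hVne I₀ hI₀.1
    have hV0t : V₀ ≠ ∞ := hVnetop I₀ hI₀.1
    have hK4 : ∀ K ∈ BF I, volume (dint K) * V₀ ≤ κ * VI * volume (dint K ∩ B₀) := by
      intro K hK
      have hKB : K ∈ ℬ I := (hBFmem I hI K).mp hK
      have hJ := h7 I₀ hI₀.1 I hI (hmin I hIs) K hKB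
      have hvK0 : volume (dint K) ≠ 0 := by
        rw [volume_dint]
        simpa [ENNReal.ofReal_eq_zero, not_le] using dlen_pos K
      have hvKt : volume (dint K) ≠ ∞ := by rw [volume_dint]; exact ENNReal.ofReal_ne_top
      have hNt : volume (dint K ∩ B₀) ≠ ∞ :=
        (lt_of_le_of_lt (measure_mono Set.inter_subset_left)
          (lt_top_iff_ne_top.mpr hvKt)).ne
      by_cases hκ0 : κ = 0
      · exfalso
        rw [hκ0, ENNReal.inv_zero] at hJ
        have hdiv0 : V₀ / VI ≠ 0 := by
          simp [ENNReal.div_eq_zero_iff, hV0ne, hVIt]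
        rw [ENNReal.top_mul hdiv0] at hJ
        have hlt : volume (dint K ∩ B₀) / volume (dint K) < ⊤ :=
          ENNReal.div_lt_top hNt hvK0
        exact hlt.ne (top_le_iff.mp hJ)
      · have step1 : (V₀ * volume (dint K)) * (κ⁻¹ * VI⁻¹) ≤ volume (dint K ∩ B₀) := by
          have h' := mul_le_mul_left hJ (volume (dint K))
          rw [ENNReal.div_mul_cancel hvK0 hvKt] at h'
          calc (V₀ * volume (dint K)) * (κ⁻¹ * VI⁻¹)
              = κ⁻¹ * (V₀ / VI) * volume (dint K) := by rw [div_eq_mul_inv]; ring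
            _ ≤ _ := h'
        have h'' := mul_le_mul_left step1 (κ * VI)
        calc volume (dint K) * V₀
            = (V₀ * volume (dint K)) * ((κ⁻¹ * κ) * (VI⁻¹ * VI)) := by
              rw [ENNReal.inv_mul_cancel hκ0 hκ, ENNReal.inv_mul_cancel hVIne hVIt]
              ring
          _ = ((V₀ * volume (dint K)) * (κ⁻¹ * VI⁻¹)) * (κ * VI) := by ring
          _ ≤ volume (dint K ∩ B₀) * (κ * VI) := h''
          _ = κ * VI * volume (dint K ∩ B₀) := by ring
    have hCS' : ENNReal.ofReal ((Qop ℐ ℬ a I) ^ 2) * VI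
        ≤ ∑ K ∈ BF I, ENNReal.ofReal (a K ^ 2) * volume (dint K) := by
      calc ENNReal.ofReal ((Qop ℐ ℬ a I) ^ 2) * VI
          = ENNReal.ofReal ((Qop ℐ ℬ a I) ^ 2 * (∑ K ∈ BF I, dlen K)) := by
            rw [hVIdef, hVol I hI, ← ENNReal.ofReal_mul (sq_nonneg _)]
        _ ≤ ENNReal.ofReal (∑ K ∈ BF I, a K ^ 2 * dlen K) :=
            ENNReal.ofReal_le_ofReal (hCS I hI)
        _ = ∑ K ∈ BF I, ENNReal.ofReal (a K ^ 2 * dlen K) :=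
            ENNReal.ofReal_sum_of_nonneg (fun K _ => mul_nonneg (sq_nonneg _) (dlen_pos K).le)
        _ = ∑ K ∈ BF I, ENNReal.ofReal (a K ^ 2) * volume (dint K) := by
            refine Finset.sum_congr rfl fun K _ => ?_
            rw [volume_dint, ← ENNReal.ofReal_mul (sq_nonneg _)]
    have hmul : (ENNReal.ofReal ((Qop ℐ ℬ a I) ^ 2) * V₀) * VI
        ≤ (κ * ∑ K ∈ BF I, ENNReal.ofReal (a K ^ 2) * volume (dint K ∩ B₀)) * VI := by
      calc (ENNReal.ofReal ((Qop ℐ ℬ a I) ^ 2) * V₀) * VI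
          = (ENNReal.ofReal ((Qop ℐ ℬ a I) ^ 2) * VI) * V₀ := by ring
        _ ≤ (∑ K ∈ BF I, ENNReal.ofReal (a K ^ 2) * volume (dint K)) * V₀ :=
            mul_le_mul_left hCS' V₀
        _ = ∑ K ∈ BF I, ENNReal.ofReal (a K ^ 2) * (volume (dint K) * V₀) := by
            rw [Finset.sum_mul]
            exact Finset.sum_congr rfl fun K _ => by ring
        _ ≤ ∑ K ∈ BF I, ENNReal.ofReal (a K ^ 2) * (κ * VI * volume (dint K ∩ B₀)) :=
            Finset.sum_le_sum fun K hK => mul_le_mul_right (hK4 K hK) _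
        _ = (κ * ∑ K ∈ BF I, ENNReal.ofReal (a K ^ 2) * volume (dint K ∩ B₀)) * VI := by
            rw [Finset.mul_sum, Finset.sum_mul]
            exact Finset.sum_congr rfl fun K _ => by ring
    exact (ENNReal.mul_le_mul_iff_left hVIne hVIt).mp hmul
  -- sum over I and conclude
  have hV0ne : V₀ ≠ 0 := hVne I₀ hI₀.1
  have hV0t : V₀ ≠ ∞ := hVnetop I₀ hI₀.1
  have hB₀meas : MeasurableSet B₀ := by
    rw [hB₀, unionBD]
    exact MeasurableSet.biUnion (hBfin I₀ hI₀.1).countable fun K _ => measurable_dint K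
  have hdisj : (↑hsfin.toFinset : Set Dy).PairwiseDisjoint BF := by
    intro I hIm J hJm hne'
    have hI : I ∈ ℐ := (hsfin.mem_toFinset.mp hIm).1
    have hJ : J ∈ ℐ := (hsfin.mem_toFinset.mp hJm).1
    refine Finset.disjoint_left.mpr fun K hKI hKJ => ?_
    exact Set.disjoint_left.mp (h4 I hI J hJ hne')
      ((hBFmem I hI K).mp hKI) ((hBFmem J hJ K).mp hKJ)
  have hfinal : (∑ I ∈ hsfin.toFinset, ENNReal.ofReal ((Qop ℐ ℬ a I) ^ 2)) * V₀
      ≤ (κ * T) * V₀ := by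
    calc (∑ I ∈ hsfin.toFinset, ENNReal.ofReal ((Qop ℐ ℬ a I) ^ 2)) * V₀
        = ∑ I ∈ hsfin.toFinset, ENNReal.ofReal ((Qop ℐ ℬ a I) ^ 2) * V₀ :=
          Finset.sum_mul _ _ _
      _ ≤ ∑ I ∈ hsfin.toFinset,
            κ * ∑ K ∈ BF I, ENNReal.ofReal (a K ^ 2) * volume (dint K ∩ B₀) :=
          Finset.sum_le_sum fun I hI => hkey I (hsfin.mem_toFinset.mp hI)
      _ = κ * ∑ I ∈ hsfin.toFinset,
            ∑ K ∈ BF I, ENNReal.ofReal (a K ^ 2) * volume (dint K ∩ B₀) := by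
          rw [Finset.mul_sum]
      _ = κ * ∑ K ∈ hsfin.toFinset.biUnion BF,
            ENNReal.ofReal (a K ^ 2) * volume (dint K ∩ B₀) := by
          rw [Finset.sum_biUnion hdisj]
      _ ≤ κ * (T * V₀) := mul_le_mul_right (key_lintegral a _ B₀) κ
      _ = (κ * T) * V₀ := by ring
  exact (ENNReal.mul_le_mul_iff_left hV0ne hV0t).mp hfinal

end
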